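/- Let A = kQ/I be a graded gentle algebra that is homologically smooth and proper, and let e be a sum of vertex idempotents. Then eAe is homologically smooth if and only if A_e is proper. -/

import Mathlib

universe w

/-- A graded quiver with a set of quadratic monomial relations: the data `(Q, I)`
presenting a graded quadratic monomial algebra `A = kQ/⟨I⟩` (viewed as a dg algebra
with zero differential).  `rel a b` means that the length-two path `ab` lies in `I`;
`deg` is the grading of the arrows. -/
structure QuadData : Type (w + 1) where
  V : Type w
  E : Type w
  src : E → V
  tgt : E → V
  deg : E → ℤ
  rel : E → E → Prop
  rel_comp : ∀ a b, rel a b → tgt a = src b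

namespace QuadData

variable (Q : QuadData)

/-- A list of arrows is composable (i.e. is a path). -/
def Composable (l : List Q.E) : Prop := l.Chain' fun a b => Q.tgt a = Q.src b

/-- No two consecutive arrows of the path form a relation. -/
def AvoidsRel (l : List Q.E) : Prop := l.Chain' fun a b => ¬ Q.rel a b

/-- All consecutive pairs of arrows of the path are relations. -/
def AllRel (l : List Q.E) : Prop := l.Chain' fun a b => Q.rel a b

end QuadData

namespace QuadData

variable (Q : QuadData)

/-- There is a cyclic path `α₁ ⋯ αₙ` with `αᵢαᵢ₊₁ ∈ I` for all `i ∈ ℤ/nℤ`. -/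
def RelCycle : Prop :=
  ∃ (l : List Q.E) (h : l ≠ []), Q.AllRel l ∧ Q.rel (l.getLast h) (l.head h)

/-- There is a cyclic path `α₁ ⋯ αₙ` with `αᵢαᵢ₊₁ ∉ I` for all `i ∈ ℤ/nℤ`. -/
def RelFreeCycle : Prop :=
  ∃ (l : List Q.E) (h : l ≠ []), Q.Composable l ∧ Q.AvoidsRel l ∧
    Q.tgt (l.getLast h) = Q.src (l.head h) ∧ ¬ Q.rel (l.getLast h) (l.head h)

/-- Combinatorial characterisation of homological smoothness of `kQ/⟨I⟩`:
there is no cyclic path all of whose consecutive pairs are relations. -/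
def SmoothP : Prop := ¬ Q.RelCycle

/-- Combinatorial characterisation of properness of `kQ/⟨I⟩`:
there is no relation-free cyclic path. -/
def ProperP : Prop := ¬ Q.RelFreeCycle

/-- `A = kQ/⟨I⟩` is homologically smooth iff its minimal bimodule resolution, whose
terms are indexed by the paths all of whose consecutive pairs lie in `I`, is finite. -/
def IsSmoothC : Prop := Finite {l : List Q.E // Q.AllRel l}

/-- `A = kQ/⟨I⟩` (with zero differential) is proper iff its total cohomology, i.e.
`A` itself, is finite dimensional over `k`; a basis of `A` is given by the
relation-avoiding paths. -/
def IsProperC : Prop := Finite {l : List Q.E // Q.Composable l ∧ Q.AvoidsRel l}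

/-- The graded quadratic dual `A⁽ᴵ⁾ = kQᵒᵖ/⟨I^⊥⟩`, where
`I^⊥ = {βᵒᵖαᵒᵖ : αβ ∉ I}` and `|αᵒᵖ| = 1 - |α|`. -/
@[reducible] def dual : QuadData where
  V := Q.V
  E := Q.E
  src := Q.tgt
  tgt := Q.src
  deg := fun e => 1 - Q.deg e
  rel := fun x y => Q.tgt y = Q.src x ∧ ¬ Q.rel y x
  rel_comp := fun _ _ h => h.1.symm

/-- An arrow of the quiver of `A_e` (for `supp` the support of the idempotent `e`):
a path `α₁ ⋯ αₛ` all of whose consecutive pairs are relations passing through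
vertices of `supp`, with endpoints outside `supp`. -/
structure CutArrow (supp : Set Q.V) where
  letters : List Q.E
  ne : letters ≠ []
  chain : letters.Chain' fun a b => Q.rel a b ∧ Q.src b ∈ supp
  src_out : Q.src (letters.head ne) ∉ supp
  tgt_out : Q.tgt (letters.getLast ne) ∉ supp

/-- The graded quadratic monomial algebra `A_e` obtained by collapsing the relations
through the vertices in `supp`: vertices `Q₀ ∖ supp`, arrows `[α₁ ⋯ αₛ]` of degree
`Σ|αᵢ| - s + 1`, and relations `[α₁ ⋯ αₛ][β₁ ⋯ βₜ]` whenever `αₛβ₁ ∈ I`. -/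
@[reducible] def cut (supp : Set Q.V) : QuadData where
  V := {v : Q.V // v ∉ supp}
  E := Q.CutArrow supp
  src := fun p => ⟨Q.src (p.letters.head p.ne), p.src_out⟩
  tgt := fun p => ⟨Q.tgt (p.letters.getLast p.ne), p.tgt_out⟩
  deg := fun p => ((p.letters.map Q.deg).sum - p.letters.length) + 1
  rel := fun p q => Q.rel (p.letters.getLast p.ne) (q.letters.head q.ne)
  rel_comp := fun _ _ h => Subtype.ext (Q.rel_comp _ _ h)

/-- An arrow of the presentation of the idempotent subalgebra `eAe`:
a relation-avoiding path with endpoints in `supp` and interior outside `supp`. -/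
structure IdemArrow (supp : Set Q.V) where
  letters : List Q.E
  ne : letters ≠ []
  chain : letters.Chain' fun a b => Q.tgt a = Q.src b ∧ ¬ Q.rel a b ∧ Q.src b ∉ supp
  src_in : Q.src (letters.head ne) ∈ supp
  tgt_in : Q.tgt (letters.getLast ne) ∈ supp

/-- The idempotent subalgebra `eAe` as a graded quadratic monomial algebra. -/
@[reducible] def idem (supp : Set Q.V) : QuadData where
  V := {v : Q.V // v ∈ supp}
  E := Q.IdemArrow supp
  src := fun p => ⟨Q.src (p.letters.head p.ne), p.src_in⟩
  tgt := fun p => ⟨Q.tgt (p.letters.getLast p.ne), p.tgt_in⟩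
  deg := fun p => (p.letters.map Q.deg).sum
  rel := fun p q => Q.rel (p.letters.getLast p.ne) (q.letters.head q.ne)
  rel_comp := fun _ _ h => Subtype.ext (Q.rel_comp _ _ h)

/-- An isomorphism of presentations of graded quadratic monomial algebras: it
induces an isomorphism of the associated dg algebras (with zero differential). -/
structure Iso (Q₁ Q₂ : QuadData) where
  vEquiv : Q₁.V ≃ Q₂.V
  eEquiv : Q₁.E ≃ Q₂.E
  map_src : ∀ e, Q₂.src (eEquiv e) = vEquiv (Q₁.src e)
  map_tgt : ∀ e, Q₂.tgt (eEquiv e) = vEquiv (Q₁.tgt e)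
  map_deg : ∀ e, Q₂.deg (eEquiv e) = Q₁.deg e
  map_rel : ∀ a b, Q₁.rel a b ↔ Q₂.rel (eEquiv a) (eEquiv b)

/-- The conditions for `(Q, I)` to present a (graded) gentle algebra. -/
structure IsGentle (Q : QuadData) : Prop where
  finV : Finite Q.V
  finE : Finite Q.E
  src_two : ∀ a b c : Q.E, Q.src a = Q.src b → Q.src b = Q.src c → a = b ∨ b = c ∨ a = c
  tgt_two : ∀ a b c : Q.E, Q.tgt a = Q.tgt b → Q.tgt b = Q.tgt c → a = b ∨ b = c ∨ a = c
  rel_right : ∀ a b b', Q.rel a b → Q.rel a b' → b = b'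
  rel_left : ∀ a a' b, Q.rel a b → Q.rel a' b → a = a'
  nonrel_right : ∀ a b b', Q.tgt a = Q.src b → Q.tgt a = Q.src b' →
    ¬ Q.rel a b → ¬ Q.rel a b' → b = b'
  nonrel_left : ∀ a a' b, Q.tgt a = Q.src b → Q.tgt a' = Q.src b →
    ¬ Q.rel a b → ¬ Q.rel a' b → a = a'

end QuadData


section MyAux

variable {α : Type*}


variable {α : Type*}

theorem my_head_app {l₁ l₂ : List α} (h : l₁ ≠ []) (h' : l₁ ++ l₂ ≠ []) :
    (l₁ ++ l₂).head h' = l₁.head h := by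
  rw [List.head_append]
  simp [h]

theorem my_last_app {l₁ l₂ : List α} (h : l₂ ≠ []) (h' : l₁ ++ l₂ ≠ []) :
    (l₁ ++ l₂).getLast h' = l₂.getLast h := by
  rw [List.getLast_append]
  simp [h]

theorem my_chain'_and {R₁ R₂ : α → α → Prop} {l : List α} (h1 : l.Chain' R₁)
    (h2 : l.Chain' R₂) : l.Chain' fun a b => R₁ a b ∧ R₂ a b := by
  rw [List.Chain', List.isChain_iff_getElem] at *
  exact fun i hi => ⟨h1 i hi, h2 i hi⟩

theorem my_chain'_mem {R : α → α → Prop} : ∀ {l : List α}, l.Chain' R →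
    l.Chain' fun a b => ∃ (_ : a ∈ l) (_ : b ∈ l), R a b := by
  intro l
  induction l with
  | nil => simp [List.Chain', List.isChain_nil]
  | cons a t ih =>
    intro h
    rw [List.Chain', List.isChain_cons] at h ⊢
    refine ⟨?_, (ih h.2).imp ?_⟩
    · intro y hy
      exact ⟨List.mem_cons_self,
        List.mem_cons_of_mem a (List.mem_of_mem_head? hy), h.1 y hy⟩
    · rintro x y ⟨hx, hy, r⟩
      exact ⟨List.mem_cons_of_mem a hx, List.mem_cons_of_mem a hy, r⟩

theorem my_cyc_pred {R : α → α → Prop} {l : List α} (hne : l ≠ [])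
    (hc : l.Chain' R) (hw : R (l.getLast hne) (l.head hne)) :
    ∀ p ∈ l, (∃ q ∈ l, R q p) ∧ ∃ q ∈ l, R p q := by
  intro p hp
  obtain ⟨i, hi, rfl⟩ := List.getElem_of_mem hp
  rw [List.Chain', List.isChain_iff_getElem] at hc
  constructor
  · rcases Nat.eq_zero_or_pos i with h0 | h0
    · subst h0
      exact ⟨l.getLast hne, List.getLast_mem hne, by rwa [List.head_eq_getElem] at hw⟩
    · refine ⟨l[i-1], List.getElem_mem (by omega), ?_⟩
      have := hc (i-1) (by omega)
      simpa [Nat.sub_add_cancel h0] using this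
  · rcases lt_or_ge (i+1) l.length with h1 | h1
    · exact ⟨l[i+1], List.getElem_mem h1, by simpa using hc i (by omega)⟩
    · have hieq : i = l.length - 1 := by omega
      subst hieq
      exact ⟨l.head hne, List.head_mem hne, by rwa [List.getLast_eq_getElem] at hw⟩

theorem my_find_split {P S : α → α → Prop} : ∀ (L : List α),
    (L.Chain' fun a b => P a b ∨ S a b) → ¬ L.Chain' P →
    ∃ L₁ a b L₂, L = L₁ ++ a :: b :: L₂ ∧ S a b := by
  intro L
  induction L with
  | nil => intro _ h; exact absurd List.isChain_nil h
  | cons a t ih =>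
    intro hc hn
    cases t with
    | nil => exact absurd (List.isChain_singleton a) hn
    | cons b t' =>
      rw [List.Chain', List.isChain_cons_cons] at hc
      rcases hc.1 with hP | hS
      · have hnt : ¬ (b :: t').Chain' P := fun h => hn (List.isChain_cons_cons.mpr ⟨hP, h⟩)
        obtain ⟨L₁, x, y, L₂, heq, hxy⟩ := ih hc.2 hnt
        exact ⟨a :: L₁, x, y, L₂, by simp [heq], hxy⟩
      · exact ⟨[], a, b, t', rfl, hS⟩



theorem my_getLast_congr {L M : List α} (h : L = M) (hne : L ≠ []) (hM : M ≠ []) :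
    L.getLast hne = M.getLast hM := by subst h; rfl

theorem my_head_congr {L M : List α} (h : L = M) (hne : L ≠ []) (hM : M ≠ []) :
    L.head hne = M.head hM := by subst h; rfl

theorem my_cyc_find {P S : α → α → Prop} {L : List α} (hne : L ≠ [])
    (hc : L.Chain' fun a b => P a b ∨ S a b)
    (hw : P (L.getLast hne) (L.head hne) ∨ S (L.getLast hne) (L.head hne))
    (hnp : ¬ (L.Chain' P ∧ P (L.getLast hne) (L.head hne))) :
    ∃ (L' : List α) (hne' : L' ≠ []),
      (L'.Chain' fun a b => P a b ∨ S a b) ∧ S (L'.getLast hne') (L'.head hne') := by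
  rcases hw with hPw | hSw
  · have hnc : ¬ L.Chain' P := fun h => hnp ⟨h, hPw⟩
    obtain ⟨L₁, a, b, L₂, hLeq, hab⟩ := my_find_split _ hc hnc
    have hassoc : L = (L₁ ++ [a]) ++ (b :: L₂) := by simp [hLeq]
    rw [hassoc] at hc
    rw [List.Chain', List.isChain_append] at hc
    obtain ⟨h1, h2, hj⟩ := hc
    refine ⟨(b :: L₂) ++ (L₁ ++ [a]), by simp, ?_, ?_⟩
    · rw [List.Chain', List.isChain_append]
      refine ⟨h2, h1, ?_⟩
      intro x hx y hy
      rw [List.getLast?_eq_getLast (by simp : b :: L₂ ≠ [])] at hx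
      rw [List.head?_eq_head (by simp : L₁ ++ [a] ≠ [])] at hy
      simp only [Option.mem_some_iff] at hx hy
      subst hx; subst hy
      have hL1 : L.getLast hne = (b :: L₂).getLast (by simp) := by
        rw [my_getLast_congr hassoc hne (by simp)]
        exact my_last_app (by simp) _
      have hL2 : L.head hne = (L₁ ++ [a]).head (by simp) := by
        rw [my_head_congr hassoc hne (by simp)]
        cases L₁ with
        | nil => simp
        | cons c t => simp
      rw [← hL1, ← hL2]
      exact Or.inl hPw
    · have e1 : ((b :: L₂) ++ (L₁ ++ [a])).getLast (by simp) = a := by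
        rw [my_last_app (by simp : L₁ ++ [a] ≠ []) _]
        rw [List.getLast_append]; simp
      have e2 : ((b :: L₂) ++ (L₁ ++ [a])).head (by simp) = b := by
        rw [my_head_app (by simp : b :: L₂ ≠ []) _]; simp
      rw [e1, e2]; exact hab
  · exact ⟨L, hne, hc, hSw⟩

theorem my_split_runs {P S : α → α → Prop} : ∀ (L : List α) (hne : L ≠ []),
    (L.Chain' fun a b => P a b ∨ S a b) →
    ∃ (ls : List {p : List α // p ≠ []}) (hls : ls ≠ []),
      (∀ p ∈ ls, (p : List α).Chain' P) ∧
      (ls.Chain' fun p q => S (p.1.getLast p.2) (q.1.head q.2)) ∧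
      (ls.head hls).1.head (ls.head hls).2 = L.head hne ∧
      (ls.getLast hls).1.getLast (ls.getLast hls).2 = L.getLast hne := by
  intro L
  induction L with
  | nil => intro h; exact absurd rfl h
  | cons a t ih =>
    intro _ hc
    cases t with
    | nil =>
      exact ⟨[⟨[a], by simp⟩], by simp, by simp [List.Chain'], by simp [List.Chain'], rfl, rfl⟩
    | cons b t' =>
      rw [List.Chain', List.isChain_cons_cons] at hc
      obtain ⟨ls, hls, hP, hS, hhd, hlast⟩ := ih (by simp) hc.2
      rcases hc.1 with hPab | hSab
      · -- extend the first run with `a`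
        obtain ⟨p₀, rest, rfl⟩ := List.exists_cons_of_ne_nil hls
        have hp0 : (p₀ : List α).head p₀.2 = b := hhd
        refine ⟨⟨a :: p₀.1, by simp⟩ :: rest, by simp, ?_, ?_, ?_, ?_⟩
        · intro p hp
          rcases List.mem_cons.mp hp with rfl | hp
          · rw [List.Chain', List.isChain_cons]
            refine ⟨?_, hP p₀ List.mem_cons_self⟩
            intro y hy
            rw [List.head?_eq_head p₀.2, Option.mem_some_iff] at hy
            subst hy
            rw [hp0]
            exact hPab
          · exact hP p (List.mem_cons_of_mem _ hp)
        · rw [List.Chain', List.isChain_cons] at hS ⊢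
          refine ⟨?_, hS.2⟩
          intro y hy
          have := hS.1 y hy
          simpa [List.getLast_cons p₀.2] using this
        · simp
        · cases rest with
          | nil =>
            simp only [List.getLast_singleton] at hlast ⊢
            rw [show ((⟨a :: p₀.1, by simp⟩ : {p : List α // p ≠ []}) : List α).getLast (by simp)
                = (p₀ : List α).getLast p₀.2 from List.getLast_cons p₀.2]
            rw [hlast]
            exact (List.getLast_cons (by simp)).symm
          | cons r rs =>
            rw [List.getLast_cons (by simp : r :: rs ≠ [])]
            rw [List.getLast_cons (by simp : r :: rs ≠ [])] at hlast
            rw [hlast]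
            exact (List.getLast_cons (by simp)).symm
      · -- start a new run `[a]`
        refine ⟨⟨[a], by simp⟩ :: ls, by simp, ?_, ?_, rfl, ?_⟩
        · intro p hp
          rcases List.mem_cons.mp hp with rfl | hp
          · simp [List.Chain']
          · exact hP p hp
        · rw [List.Chain', List.isChain_cons]
          refine ⟨?_, hS⟩
          intro y hy
          rw [List.head?_eq_head hls, Option.mem_some_iff] at hy
          subst hy
          simpa [hhd] using hSab
        · rw [List.getLast_cons hls, hlast]
          exact (List.getLast_cons (by simp)).symm


end MyAux

theorem my_flatten_head {α : Type*} {ls : List (List α)} (h : ls ≠ []) (h2 : ls.head h ≠ [])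
    (h3 : ls.flatten ≠ []) : ls.flatten.head h3 = (ls.head h).head h2 := by
  cases ls with
  | nil => exact absurd rfl h
  | cons p rest =>
    have he : (p :: rest).flatten = p ++ rest.flatten := by simp
    rw [my_head_congr he h3 (by rw [← he]; exact h3)]
    exact my_head_app h2 _

theorem my_flatten_last {α : Type*} {ls : List (List α)} (h : ls ≠ []) (h2 : ls.getLast h ≠ [])
    (h3 : ls.flatten ≠ []) : ls.flatten.getLast h3 = (ls.getLast h).getLast h2 := by
  have hsplit : ls = ls.dropLast ++ [ls.getLast h] := (List.dropLast_append_getLast h).symm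
  have he : ls.flatten = ls.dropLast.flatten ++ ls.getLast h := by
    conv_lhs => rw [hsplit]
    rw [List.flatten_append]
    simp
  rw [my_getLast_congr he h3 (by rw [← he]; exact h3)]
  exact my_last_app h2 _

namespace QuadData

/-- junction of "relation" type through `supp` -/
abbrev relJ (Q : QuadData) (supp : Set Q.V) (a b : Q.E) : Prop :=
  Q.rel a b ∧ Q.src b ∈ supp

/-- junction of "non-relation" type outside `supp` -/
abbrev freeJ (Q : QuadData) (supp : Set Q.V) (a b : Q.E) : Prop :=
  Q.tgt a = Q.src b ∧ ¬ Q.rel a b ∧ Q.src b ∉ supp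

theorem dir1 (Q : QuadData) (supp : Set Q.V) (hs : Q.SmoothP) :
    (Q.idem supp).RelCycle → (Q.cut supp).RelFreeCycle := by
  rintro ⟨l, hne, hall, hwrap⟩
  classical
  set Lp : List (List Q.E) := l.map fun p => p.letters with hLp
  have hnil : [] ∉ Lp := by
    simp only [hLp, List.mem_map]
    rintro ⟨p, -, hp⟩
    exact p.ne hp
  have hLpne : Lp ≠ [] := by simp [hLp, hne]
  have hLne : Lp.flatten ≠ [] := by
    rw [Ne, List.flatten_eq_nil_iff]
    intro h
    exact hnil (h (Lp.head hLpne) (List.head_mem hLpne) ▸ List.head_mem hLpne)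
  have hheadLp : Lp.head hLpne = (l.head hne).letters := List.head_map _
  have hlastLp : Lp.getLast hLpne = (l.getLast hne).letters := List.getLast_map _
  have hheadL : Lp.flatten.head hLne = (l.head hne).letters.head (l.head hne).ne := by
    rw [my_flatten_head hLpne (by rw [hheadLp]; exact (l.head hne).ne) hLne]
    exact my_head_congr hheadLp _ _
  have hlastL : Lp.flatten.getLast hLne
      = (l.getLast hne).letters.getLast (l.getLast hne).ne := by
    rw [my_flatten_last hLpne (by rw [hlastLp]; exact (l.getLast hne).ne) hLne]
    exact my_getLast_congr hlastLp _ _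
  have hchain : Lp.flatten.Chain' fun a b => Q.relJ supp a b ∨ Q.freeJ supp a b := by
    rw [List.Chain', List.isChain_flatten hnil]
    constructor
    · intro p' hp'
      obtain ⟨p, -, rfl⟩ := List.mem_map.mp hp'
      exact p.chain.imp fun a b h => Or.inr ⟨h.1, h.2.1, h.2.2⟩
    · rw [hLp, List.isChain_map]
      refine hall.imp ?_
      intro p q hpq x hx y hy
      rw [List.getLast?_eq_getLast p.ne, Option.mem_some_iff] at hx
      rw [List.head?_eq_head q.ne, Option.mem_some_iff] at hy
      subst hx; subst hy
      exact Or.inl ⟨hpq, q.src_in⟩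
  have hwrapT : Q.relJ supp (Lp.flatten.getLast hLne) (Lp.flatten.head hLne) ∨
      Q.freeJ supp (Lp.flatten.getLast hLne) (Lp.flatten.head hLne) := by
    rw [hlastL, hheadL]
    exact Or.inl ⟨hwrap, (l.head hne).src_in⟩
  have hnp : ¬ (Lp.flatten.Chain' (Q.relJ supp) ∧
      Q.relJ supp (Lp.flatten.getLast hLne) (Lp.flatten.head hLne)) := by
    rintro ⟨h1, h2⟩
    exact hs ⟨Lp.flatten, hLne, h1.imp fun a b h => h.1, h2.1⟩
  obtain ⟨L', hne', hc', hSw⟩ := my_cyc_find hLne hchain hwrapT hnp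
  obtain ⟨ls, hls, hPc, hSc, hhd, hlast⟩ := my_split_runs L' hne' hc'
  have hSwrap : Q.freeJ supp ((ls.getLast hls).1.getLast (ls.getLast hls).2)
      ((ls.head hls).1.head (ls.head hls).2) := by
    rw [hhd, hlast]; exact hSw
  have hcp := my_cyc_pred hls hSc hSwrap
  let F : {x : {p : List Q.E // p ≠ []} // x ∈ ls} → Q.CutArrow supp := fun x =>
    { letters := x.1.1
      ne := x.1.2
      chain := hPc x.1 x.2
      src_out := by
        obtain ⟨q, hq, hSqx⟩ := (hcp x.1 x.2).1
        exact hSqx.2.2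
      tgt_out := by
        obtain ⟨q, hq, hSxq⟩ := (hcp x.1 x.2).2
        rw [hSxq.1]
        exact hSxq.2.2 }
  have hclne : ls.attach.map F ≠ [] := by
    simp only [Ne, List.map_eq_nil_iff, List.attach_eq_nil_iff]
    exact hls
  have e1 : (ls.attach.map F).getLast hclne = F ⟨ls.getLast hls, List.getLast_mem hls⟩ := by
    rw [List.getLast_map, List.getLast_attach]
  have e2 : (ls.attach.map F).head hclne = F ⟨ls.head hls, List.head_mem hls⟩ := by
    rw [List.head_map, List.head_attach]
  refine ⟨ls.attach.map F, hclne, ?_, ?_, ?_, ?_⟩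
  · rw [QuadData.Composable, List.Chain', List.isChain_map, List.isChain_attach]
    refine (my_chain'_mem hSc).imp ?_
    rintro p q ⟨hp, hq, h⟩
    exact ⟨hp, hq, Subtype.ext h.1⟩
  · rw [QuadData.AvoidsRel, List.Chain', List.isChain_map, List.isChain_attach]
    refine (my_chain'_mem hSc).imp ?_
    rintro p q ⟨hp, hq, h⟩
    exact ⟨hp, hq, h.2.1⟩
  · rw [e1, e2]
    exact Subtype.ext hSwrap.1
  · rw [e1, e2]
    exact hSwrap.2.1

theorem dir2 (Q : QuadData) (supp : Set Q.V) (hp : Q.ProperP) :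
    (Q.cut supp).RelFreeCycle → (Q.idem supp).RelCycle := by
  rintro ⟨l, hne, hcomp, havoid, hwt, hwr⟩
  classical
  set Lp : List (List Q.E) := l.map fun p => p.letters with hLp
  have hnil : [] ∉ Lp := by
    simp only [hLp, List.mem_map]
    rintro ⟨p, -, hp⟩
    exact p.ne hp
  have hLpne : Lp ≠ [] := by simp [hLp, hne]
  have hLne : Lp.flatten ≠ [] := by
    rw [Ne, List.flatten_eq_nil_iff]
    intro h
    exact hnil (h (Lp.head hLpne) (List.head_mem hLpne) ▸ List.head_mem hLpne)
  have hheadLp : Lp.head hLpne = (l.head hne).letters := List.head_map _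
  have hlastLp : Lp.getLast hLpne = (l.getLast hne).letters := List.getLast_map _
  have hheadL : Lp.flatten.head hLne = (l.head hne).letters.head (l.head hne).ne := by
    rw [my_flatten_head hLpne (by rw [hheadLp]; exact (l.head hne).ne) hLne]
    exact my_head_congr hheadLp _ _
  have hlastL : Lp.flatten.getLast hLne
      = (l.getLast hne).letters.getLast (l.getLast hne).ne := by
    rw [my_flatten_last hLpne (by rw [hlastLp]; exact (l.getLast hne).ne) hLne]
    exact my_getLast_congr hlastLp _ _
  have hchain : Lp.flatten.Chain' fun a b => Q.freeJ supp a b ∨ Q.relJ supp a b := by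
    rw [List.Chain', List.isChain_flatten hnil]
    constructor
    · intro p' hp'
      obtain ⟨p, -, rfl⟩ := List.mem_map.mp hp'
      exact p.chain.imp fun a b h => Or.inr ⟨h.1, h.2⟩
    · rw [hLp, List.isChain_map]
      refine (my_chain'_and hcomp havoid).imp ?_
      rintro p q ⟨heq, hnr⟩ x hx y hy
      rw [List.getLast?_eq_getLast p.ne, Option.mem_some_iff] at hx
      rw [List.head?_eq_head q.ne, Option.mem_some_iff] at hy
      subst hx; subst hy
      exact Or.inl ⟨congrArg Subtype.val heq, hnr, q.src_out⟩
  have hwrapT : Q.freeJ supp (Lp.flatten.getLast hLne) (Lp.flatten.head hLne) ∨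
      Q.relJ supp (Lp.flatten.getLast hLne) (Lp.flatten.head hLne) := by
    rw [hlastL, hheadL]
    exact Or.inl ⟨congrArg Subtype.val hwt, hwr, (l.head hne).src_out⟩
  have hnp : ¬ (Lp.flatten.Chain' (Q.freeJ supp) ∧
      Q.freeJ supp (Lp.flatten.getLast hLne) (Lp.flatten.head hLne)) := by
    rintro ⟨h1, h2⟩
    exact hp ⟨Lp.flatten, hLne, h1.imp fun a b h => h.1,
      h1.imp fun a b h => h.2.1, h2.1, h2.2.1⟩
  obtain ⟨L', hne', hc', hSw⟩ := my_cyc_find hLne hchain hwrapT hnp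
  obtain ⟨ls, hls, hPc, hSc, hhd, hlast⟩ := my_split_runs L' hne' hc'
  have hSwrap : Q.relJ supp ((ls.getLast hls).1.getLast (ls.getLast hls).2)
      ((ls.head hls).1.head (ls.head hls).2) := by
    rw [hhd, hlast]; exact hSw
  have hcp := my_cyc_pred hls hSc hSwrap
  let F : {x : {p : List Q.E // p ≠ []} // x ∈ ls} → Q.IdemArrow supp := fun x =>
    { letters := x.1.1
      ne := x.1.2
      chain := hPc x.1 x.2
      src_in := by
        obtain ⟨q, hq, hSqx⟩ := (hcp x.1 x.2).1
        exact hSqx.2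
      tgt_in := by
        obtain ⟨q, hq, hSxq⟩ := (hcp x.1 x.2).2
        rw [Q.rel_comp _ _ hSxq.1]
        exact hSxq.2 }
  have hclne : ls.attach.map F ≠ [] := by
    simp only [Ne, List.map_eq_nil_iff, List.attach_eq_nil_iff]
    exact hls
  have e1 : (ls.attach.map F).getLast hclne = F ⟨ls.getLast hls, List.getLast_mem hls⟩ := by
    rw [List.getLast_map, List.getLast_attach]
  have e2 : (ls.attach.map F).head hclne = F ⟨ls.head hls, List.head_mem hls⟩ := by
    rw [List.head_map, List.head_attach]
  refine ⟨ls.attach.map F, hclne, ?_, ?_⟩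
  · rw [QuadData.AllRel, List.Chain', List.isChain_map, List.isChain_attach]
    refine (my_chain'_mem hSc).imp ?_
    rintro p q ⟨hp, hq, h⟩
    exact ⟨hp, hq, h.1⟩
  · rw [e1, e2]
    exact hSwrap.1

end QuadData


/-- Let `A = kQ/I` be a graded gentle algebra which is
homologically smooth and proper, `e` a sum of vertex idempotents with support `supp`.
Then `eAe` is homologically smooth if and only if `A_e` is proper (using the
combinatorial characterisations of smoothness and properness). -/
theorem idem_smooth_iff_cut_proper (Q : QuadData) (hg : Q.IsGentle)
    (hs : Q.SmoothP) (hp : Q.ProperP) (supp : Set Q.V) :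
    (Q.idem supp).SmoothP ↔ (Q.cut supp).ProperP := by
  exact not_congr ⟨Q.dir1 supp hs, Q.dir2 supp hp⟩
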